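/- Let X be a convex subset of a real normed vector space and let F : X × X → ℝ satisfy (A1) uniform α-strong convexity in the second argument and (A3) uniform β-Lipschitz continuity of ∇₂F in the first argument; set θ = β/α. Let g_n : X → ℝ (n ≥ 1) be differentiable functions such that each g_n is α-strongly convex on X, and define the sequence x₁ ∈ X, x_{n+1} ∈ argmin_{x∈X} Σ_{k=1}^n g_k(x). Write f_n(x) = F(x_n, x), ξ_n = ∇f_n − ∇g_n, ξ̄_{n−1} = (1/(n−1)) Σ_{k=1}^{n−1} ξ_k, and S_n = (Σ_{k=1}^{n−1} ‖x_n − x_k‖)/(n−1). Then for all n ≥ 2, ‖x_{n+1} − x_n‖ ≤ θ S_n / n + (1/(nα)) ( ‖ξ_n(x_n)‖_* + ‖ξ̄_{n−1}(x_n)‖_* ). -/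

import Mathlib

open Finset

/-- Variational inequality at a constrained minimizer of a differentiable function. -/
lemma vi_aux {E : Type*} [NormedAddCommGroup E] [NormedSpace ℝ E]
    {X : Set E} (hX : Convex ℝ X) {h : E → ℝ} {D : E →L[ℝ] ℝ} {a : E}
    (ha : a ∈ X) (hd : HasFDerivWithinAt h D X a)
    (hmin : ∀ y ∈ X, h a ≤ h y) {y : E} (hy : y ∈ X) : 0 ≤ D (y - a) := by
  have hloc : IsLocalMinOn h X a := eventually_nhdsWithin_of_forall hmin
  exact hloc.hasFDerivWithinAt_nonneg hd
    (sub_mem_posTangentConeAt_of_segment_subset (hX.segment_subset ha hy))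

set_option maxHeartbeats 1000000 in
/-- Bound on consecutive iterates with approximated per-round costs.
Under (A1) uniform `α`-strong convexity of `F` in the second argument and (A3) uniform
`β`-Lipschitzness of `∇₂F` in the first argument, if the sequence is generated by
Follow-the-Leader on `α`-strongly convex differentiable approximations `g_n` of
`f_n = F(x_n, ·)`, then for `n ≥ 2`,
`‖x_{n+1} − x_n‖ ≤ θ S_n/n + (1/(nα))(‖ξ_n(x_n)‖_* + ‖ξ̄_{n−1}(x_n)‖_*)`,
where `ξ_n = ∇f_n − ∇g_n` and `ξ̄_{n−1} = (1/(n−1)) Σ_{k=1}^{n−1} ξ_k`. -/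
theorem stmt_11
    {E : Type*} [NormedAddCommGroup E] [NormedSpace ℝ E]
    (X : Set E) (hX : Convex ℝ X)
    (F : E → E → ℝ) (D2F : E → E → (E →L[ℝ] ℝ))
    (α β θ : ℝ) (hα : 0 < α) (hβ : 0 ≤ β) (hθ : θ = β / α)
    (hgradF : ∀ z ∈ X, ∀ y ∈ X, HasFDerivWithinAt (F z) (D2F z y) X y)
    (hA1 : ∀ z ∈ X, ∀ y ∈ X, ∀ w ∈ X,
      F z w ≥ F z y + D2F z y (w - y) + α / 2 * ‖w - y‖ ^ 2)
    (hA3 : ∀ w ∈ X, ∀ y ∈ X, ∀ z ∈ X, ‖D2F w z - D2F y z‖ ≤ β * ‖w - y‖)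
    (g : ℕ → E → ℝ) (Dg : ℕ → E → (E →L[ℝ] ℝ))
    (hgradg : ∀ n, 1 ≤ n → ∀ y ∈ X, HasFDerivWithinAt (g n) (Dg n y) X y)
    (hscg : ∀ n, 1 ≤ n → ∀ y ∈ X, ∀ w ∈ X,
      g n w ≥ g n y + Dg n y (w - y) + α / 2 * ‖w - y‖ ^ 2)
    (x : ℕ → E) (hmem : ∀ n, 1 ≤ n → x n ∈ X)
    (hftl : ∀ n, 1 ≤ n → ∀ y ∈ X,
      ∑ k ∈ Finset.Icc 1 n, g k (x (n + 1)) ≤ ∑ k ∈ Finset.Icc 1 n, g k y)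
    (S : ℕ → ℝ)
    (hS : ∀ n, 2 ≤ n →
      S n = (∑ k ∈ Finset.Icc 1 (n - 1), ‖x n - x k‖) / ((n : ℝ) - 1)) :
    ∀ n, 2 ≤ n →
      ‖x (n + 1) - x n‖ ≤ θ * S n / n +
        1 / ((n : ℝ) * α) * (‖D2F (x n) (x n) - Dg n (x n)‖ +
          ‖((n : ℝ) - 1)⁻¹ •
            ∑ k ∈ Finset.Icc 1 (n - 1), (D2F (x k) (x n) - Dg k (x n))‖) := by
  intro n hn
  have hnn : n - 1 + 1 = n := by omega
  have hw : x (n + 1) ∈ X := hmem (n + 1) (by omega)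
  have hz : x n ∈ X := hmem n (by omega)
  have hnR : (2 : ℝ) ≤ (n : ℝ) := by exact_mod_cast hn
  have hc : (0 : ℝ) < (n : ℝ) - 1 := by linarith
  have hnpos : (0 : ℝ) < (n : ℝ) := by linarith
  have hcast : ((n - 1 : ℕ) : ℝ) = (n : ℝ) - 1 := by
    rw [Nat.cast_sub (by omega)]; norm_num
  set d : ℝ := ‖x (n + 1) - x n‖ with hd
  have hd0 : 0 ≤ d := norm_nonneg _
  set v : E := x n - x (n + 1) with hv
  have hvd : ‖v‖ = d := norm_sub_rev _ _
  -- derivative of partial sums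
  have hDsum : ∀ m, ∀ a ∈ X, HasFDerivWithinAt (fun y => ∑ k ∈ Icc 1 m, g k y)
      (∑ k ∈ Icc 1 m, Dg k a) X a := fun m a ha =>
    HasFDerivWithinAt.fun_sum (fun k hk => hgradg k (mem_Icc.1 hk).1 a ha)
  -- variational inequalities
  have VI1 : 0 ≤ ∑ k ∈ Icc 1 n, Dg k (x (n + 1)) v := by
    have h := vi_aux hX hw (hDsum n (x (n + 1)) hw) (hftl n (by omega)) hz
    rw [← hv] at h
    simpa only [ContinuousLinearMap.sum_apply] using h
  have VI2 : 0 ≤ ∑ k ∈ Icc 1 (n - 1), Dg k (x n) (x (n + 1) - x n) := by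
    have hm : ∀ y ∈ X, ∑ k ∈ Icc 1 (n - 1), g k (x n) ≤ ∑ k ∈ Icc 1 (n - 1), g k y := by
      have := hftl (n - 1) (by omega)
      rwa [hnn] at this
    have h := vi_aux hX hz (hDsum (n - 1) (x n) hz) hm hw
    simpa only [ContinuousLinearMap.sum_apply] using h
  -- strong convexity of the full sum
  have hcardn : ((Icc 1 n).card : ℝ) = (n : ℝ) := by
    simp [Nat.card_Icc]
  have hSC : ∀ a ∈ X, ∀ b ∈ X,
      ∑ k ∈ Icc 1 n, g k a + ∑ k ∈ Icc 1 n, Dg k a (b - a)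
        + (n : ℝ) * (α / 2 * ‖b - a‖ ^ 2) ≤ ∑ k ∈ Icc 1 n, g k b := by
    intro a ha b hb
    have h1 : ∑ k ∈ Icc 1 n, (g k a + Dg k a (b - a) + α / 2 * ‖b - a‖ ^ 2)
        ≤ ∑ k ∈ Icc 1 n, g k b :=
      Finset.sum_le_sum (fun k hk => hscg k (mem_Icc.1 hk).1 a ha b hb)
    have h2 : ∑ k ∈ Icc 1 n, (g k a + Dg k a (b - a) + α / 2 * ‖b - a‖ ^ 2)
        = ∑ k ∈ Icc 1 n, g k a + ∑ k ∈ Icc 1 n, Dg k a (b - a)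
          + (n : ℝ) * (α / 2 * ‖b - a‖ ^ 2) := by
      rw [Finset.sum_add_distrib, Finset.sum_add_distrib, Finset.sum_const,
        nsmul_eq_mul, hcardn]
    linarith [h1, h2.ge]
  -- quadratic growth at x (n+1)
  have hQG : ∑ k ∈ Icc 1 n, g k (x (n + 1)) + (n : ℝ) * (α / 2 * d ^ 2)
      ≤ ∑ k ∈ Icc 1 n, g k (x n) := by
    have h1 := hSC (x (n + 1)) hw (x n) hz
    have : ‖x n - x (n + 1)‖ = d := hvd
    rw [this] at h1
    linarith [VI1]
  -- strong convexity at x n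
  have hSC1 := hSC (x n) hz (x (n + 1)) hw
  -- main inequality : n α d² ≤ ∑ Dg k (x n) v
  have hmain : (n : ℝ) * α * d ^ 2 ≤ ∑ k ∈ Icc 1 n, Dg k (x n) v := by
    have hneg : ∀ k, Dg k (x n) v = -(Dg k (x n) (x (n + 1) - x n)) := fun k => by
      rw [hv, ← neg_sub, map_neg]
    have hsum : ∑ k ∈ Icc 1 n, Dg k (x n) v
        = -∑ k ∈ Icc 1 n, Dg k (x n) (x (n + 1) - x n) := by
      rw [Finset.sum_congr rfl (fun k _ => hneg k), Finset.sum_neg_distrib]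
    rw [hsum]
    nlinarith [hQG, hSC1]
  -- split off the top term
  have hsplit : ∑ k ∈ Icc 1 n, Dg k (x n) v
      = ∑ k ∈ Icc 1 (n - 1), Dg k (x n) v + Dg n (x n) v := by
    have := Finset.sum_Icc_succ_top (a := 1) (b := n - 1) (by omega)
      (fun k => Dg k (x n) v)
    rw [hnn] at this
    exact this
  -- rewrite D2F (x n) (x n) v as an average
  have hcard' : ((Icc 1 (n - 1)).card : ℝ) = (n : ℝ) - 1 := by
    rw [Nat.card_Icc]
    simp [hcast]
  have hD2F : D2F (x n) (x n) v = ((n : ℝ) - 1)⁻¹ *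
      ∑ k ∈ Icc 1 (n - 1), ((D2F (x n) (x n) - D2F (x k) (x n)) v
        + (D2F (x k) (x n) - Dg k (x n)) v + Dg k (x n) v) := by
    have heq : ∀ k, (D2F (x n) (x n) - D2F (x k) (x n)) v
        + (D2F (x k) (x n) - Dg k (x n)) v + Dg k (x n) v = D2F (x n) (x n) v := by
      intro k
      simp [ContinuousLinearMap.sub_apply]
    rw [Finset.sum_congr rfl (fun k _ => heq k), Finset.sum_const, nsmul_eq_mul, hcard',
      ← mul_assoc, inv_mul_cancel₀ (ne_of_gt hc), one_mul]
  -- bounds on the three pieces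
  have hb1 : ∑ k ∈ Icc 1 (n - 1), (D2F (x n) (x n) - D2F (x k) (x n)) v
      ≤ β * (∑ k ∈ Icc 1 (n - 1), ‖x n - x k‖) * d := by
    have h1 : ∀ k ∈ Icc 1 (n - 1), (D2F (x n) (x n) - D2F (x k) (x n)) v
        ≤ β * ‖x n - x k‖ * d := by
      intro k hk
      have hxk : x k ∈ X := hmem k (mem_Icc.1 hk).1
      have h2 : ‖D2F (x n) (x n) - D2F (x k) (x n)‖ ≤ β * ‖x n - x k‖ :=
        hA3 (x n) hz (x k) hxk (x n) hz
      calc (D2F (x n) (x n) - D2F (x k) (x n)) v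
          ≤ ‖(D2F (x n) (x n) - D2F (x k) (x n)) v‖ := le_abs_self _
        _ ≤ ‖D2F (x n) (x n) - D2F (x k) (x n)‖ * ‖v‖ :=
            ContinuousLinearMap.le_opNorm _ _
        _ ≤ β * ‖x n - x k‖ * d := by
            rw [hvd]; exact mul_le_mul_of_nonneg_right h2 hd0
    calc ∑ k ∈ Icc 1 (n - 1), (D2F (x n) (x n) - D2F (x k) (x n)) v
        ≤ ∑ k ∈ Icc 1 (n - 1), β * ‖x n - x k‖ * d := Finset.sum_le_sum h1
      _ = β * (∑ k ∈ Icc 1 (n - 1), ‖x n - x k‖) * d := by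
          rw [Finset.mul_sum, Finset.sum_mul]
  have hb2 : ((n : ℝ) - 1)⁻¹ * ∑ k ∈ Icc 1 (n - 1), (D2F (x k) (x n) - Dg k (x n)) v
      ≤ ‖((n : ℝ) - 1)⁻¹ •
          ∑ k ∈ Icc 1 (n - 1), (D2F (x k) (x n) - Dg k (x n))‖ * d := by
    set Ξ : E →L[ℝ] ℝ := ((n : ℝ) - 1)⁻¹ •
      ∑ k ∈ Icc 1 (n - 1), (D2F (x k) (x n) - Dg k (x n)) with hΞ
    have h1 : Ξ v = ((n : ℝ) - 1)⁻¹ *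
        ∑ k ∈ Icc 1 (n - 1), (D2F (x k) (x n) - Dg k (x n)) v := by
      simp [hΞ, ContinuousLinearMap.sum_apply]
    calc ((n : ℝ) - 1)⁻¹ * ∑ k ∈ Icc 1 (n - 1), (D2F (x k) (x n) - Dg k (x n)) v
        = Ξ v := h1.symm
      _ ≤ ‖Ξ v‖ := le_abs_self _
      _ ≤ ‖Ξ‖ * ‖v‖ := ContinuousLinearMap.le_opNorm _ _
      _ = ‖Ξ‖ * d := by rw [hvd]
  have hb3 : -((D2F (x n) (x n) - Dg n (x n)) v)
      ≤ ‖D2F (x n) (x n) - Dg n (x n)‖ * d := by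
    calc -((D2F (x n) (x n) - Dg n (x n)) v)
        ≤ ‖(D2F (x n) (x n) - Dg n (x n)) v‖ := neg_le_abs _
      _ ≤ ‖D2F (x n) (x n) - Dg n (x n)‖ * ‖v‖ := ContinuousLinearMap.le_opNorm _ _
      _ = ‖D2F (x n) (x n) - Dg n (x n)‖ * d := by rw [hvd]
  have hb4 : ∑ k ∈ Icc 1 (n - 1), Dg k (x n) v ≤ 0 := by
    have hneg : ∀ k, Dg k (x n) v = -(Dg k (x n) (x (n + 1) - x n)) := fun k => by
      rw [hv, ← neg_sub, map_neg]
    rw [Finset.sum_congr rfl (fun k _ => hneg k), Finset.sum_neg_distrib]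
    linarith [VI2]
  -- express Dg n (x n) v
  have hDgn : Dg n (x n) v = D2F (x n) (x n) v - (D2F (x n) (x n) - Dg n (x n)) v := by
    simp [ContinuousLinearMap.sub_apply]
  -- assemble the key inequality
  set R : ℝ := ‖D2F (x n) (x n) - Dg n (x n)‖ +
    ‖((n : ℝ) - 1)⁻¹ • ∑ k ∈ Icc 1 (n - 1), (D2F (x k) (x n) - Dg k (x n))‖ with hR
  have hR0 : 0 ≤ R := by positivity
  have hSval : S n = (∑ k ∈ Icc 1 (n - 1), ‖x n - x k‖) / ((n : ℝ) - 1) := hS n hn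
  have hS0 : 0 ≤ S n := by
    rw [hSval]
    exact div_nonneg (Finset.sum_nonneg fun k _ => norm_nonneg _) (le_of_lt hc)
  have hkey : (n : ℝ) * α * d ^ 2 ≤ β * S n * d + R * d := by
    have hsum3 := hD2F
    have hinv0 : 0 ≤ ((n : ℝ) - 1)⁻¹ := le_of_lt (inv_pos.2 hc)
    have hT : ∑ k ∈ Icc 1 (n - 1), ((D2F (x n) (x n) - D2F (x k) (x n)) v
        + (D2F (x k) (x n) - Dg k (x n)) v + Dg k (x n) v)
        = ∑ k ∈ Icc 1 (n - 1), (D2F (x n) (x n) - D2F (x k) (x n)) v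
          + ∑ k ∈ Icc 1 (n - 1), (D2F (x k) (x n) - Dg k (x n)) v
          + ∑ k ∈ Icc 1 (n - 1), Dg k (x n) v := by
      rw [Finset.sum_add_distrib, Finset.sum_add_distrib]
    have hbound1 : ((n : ℝ) - 1)⁻¹ *
        ∑ k ∈ Icc 1 (n - 1), (D2F (x n) (x n) - D2F (x k) (x n)) v
        ≤ β * S n * d := by
      have := mul_le_mul_of_nonneg_left hb1 hinv0
      calc ((n : ℝ) - 1)⁻¹ * ∑ k ∈ Icc 1 (n - 1), (D2F (x n) (x n) - D2F (x k) (x n)) v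
          ≤ ((n : ℝ) - 1)⁻¹ * (β * (∑ k ∈ Icc 1 (n - 1), ‖x n - x k‖) * d) := this
        _ = β * S n * d := by
            rw [hSval, div_eq_mul_inv]; ring
    have hbound4 : ((n : ℝ) - 1)⁻¹ * ∑ k ∈ Icc 1 (n - 1), Dg k (x n) v ≤ 0 :=
      mul_nonpos_of_nonneg_of_nonpos hinv0 hb4
    have hD2Fb : D2F (x n) (x n) v ≤ β * S n * d +
        ‖((n : ℝ) - 1)⁻¹ • ∑ k ∈ Icc 1 (n - 1), (D2F (x k) (x n) - Dg k (x n))‖ * d := by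
      rw [hD2F, hT, mul_add, mul_add]
      linarith [hbound1, hb2, hbound4]
    calc (n : ℝ) * α * d ^ 2 ≤ ∑ k ∈ Icc 1 n, Dg k (x n) v := hmain
      _ = ∑ k ∈ Icc 1 (n - 1), Dg k (x n) v + Dg n (x n) v := hsplit
      _ ≤ Dg n (x n) v := by linarith [hb4]
      _ = D2F (x n) (x n) v - (D2F (x n) (x n) - Dg n (x n)) v := hDgn
      _ ≤ β * S n * d + R * d := by
          rw [hR]
          linarith [hD2Fb, hb3]
  -- conclude
  have hRHS : θ * S n / n + 1 / ((n : ℝ) * α) * R = (β * S n + R) / ((n : ℝ) * α) := by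
    rw [hθ]
    field_simp
  show d ≤ θ * S n / n + 1 / ((n : ℝ) * α) * R
  rw [hRHS]
  rcases eq_or_lt_of_le hd0 with hd0' | hd0'
  · rw [← hd0']
    apply div_nonneg
    · have := mul_nonneg hβ hS0
      linarith
    · positivity
  · rw [le_div_iff₀ (by positivity)]
    nlinarith [hkey, hd0']
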